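/- arXiv:2501.05522 — 4 statements merged into one kernel-verified Lean document; each statement's English description precedes it below -/
import Mathlib

section
/- Every function φ in V₂^β(ℝ) is (has a representative that is) uniformly continuous, bounded, and vanishes at infinity. -/
open MeasureTheory Real Filter Topology
open scoped FourierTransform

/-- Every `φ ∈ V₂^β(ℝ)` (an `L²` function whose Fourier transform `φhat` satisfies
`∫ (1+Ψ^{2β})|φhat|² < ∞`, recovered a.e. by Fourier inversion) has a representative
that is uniformly continuous, bounded, and vanishes at infinity. -/
theorem stmt2 (Ψ : ℝ → ℝ) (hmeas : Measurable Ψ) (hnonneg : ∀ p, 0 ≤ Ψ p)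
    (hint : Integrable (fun p => 1 / (1 + Ψ p)))
    (β : ℝ) (hβ : 1 / 2 ≤ β)
    (φ : ℝ → ℂ) (hφ : MemLp φ 2 (volume : Measure ℝ))
    (φhat : ℝ → ℂ) (hφhat : Measurable φhat)
    (hweight : Integrable (fun p => (1 + Ψ p ^ (2 * β)) * ‖φhat p‖ ^ 2))
    (hinv : ∀ᵐ x : ℝ, φ x =
      (1 / (2 * π) : ℂ) * ∫ p : ℝ, Complex.exp (-(Complex.I * p * x)) * φhat p) :
    ∃ g : ℝ → ℂ, (∀ᵐ x : ℝ, g x = φ x) ∧ UniformContinuous g ∧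
      (∃ C : ℝ, ∀ x, ‖g x‖ ≤ C) ∧ Tendsto g (cocompact ℝ) (𝓝 0) := by
  -- φhat is integrable
  have hφhat_int : Integrable φhat := by
    apply (hint.add (hweight.const_mul (1/2))).mono' hφhat.aestronglyMeasurable
    filter_upwards with p
    set t := Ψ p with ht
    set s := Ψ p ^ (2 * β) with hs
    set n := ‖φhat p‖ with hn
    have hs0 : 0 ≤ s := Real.rpow_nonneg (hnonneg p) _
    have ht0 : 0 ≤ t := hnonneg p
    have hn0 : 0 ≤ n := norm_nonneg _
    have h2s : 1 + t ≤ 2 * (1 + s) := by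
      rcases le_or_gt t 1 with h | h
      · linarith
      · have : t ^ (1:ℝ) ≤ t ^ (2 * β) :=
          Real.rpow_le_rpow_of_exponent_le h.le (by linarith)
        rw [Real.rpow_one] at this
        linarith
    have hpos : (0:ℝ) < 2 * (1 + s) := by positivity
    have h1 : 1 / (2 * (1 + s)) ≤ 1 / (1 + t) :=
      one_div_le_one_div_of_le (by linarith) h2s
    have key : n - (1 + s) * n ^ 2 / 2 ≤ 1 / (2 * (1 + s)) := by
      rw [le_div_iff₀ hpos]
      nlinarith [sq_nonneg ((1 + s) * n - 1)]
    simp only [Pi.add_apply]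
    calc n ≤ 1 / (2 * (1 + s)) + (1 + s) * n ^ 2 / 2 := by linarith
      _ ≤ 1 / (1 + t) + 1 / 2 * ((1 + s) * n ^ 2) := by linarith
  -- the representative
  have hπ : (π : ℝ) ≠ 0 := Real.pi_ne_zero
  have hgeq : ∀ x : ℝ, (1 / (2 * π) : ℂ) * 𝓕 φhat (x * (2 * π)⁻¹)
      = (1 / (2 * π) : ℂ) * ∫ p : ℝ, Complex.exp (-(Complex.I * p * x)) * φhat p := by
    intro x
    congr 1
    rw [Real.fourier_eq']
    refine integral_congr_ae (Filter.Eventually.of_forall fun v => ?_)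
    have hinner : (inner ℝ v (x * (2 * π)⁻¹) : ℝ) = v * (x * (2 * π)⁻¹) := by
      rw [RCLike.inner_apply', conj_trivial]
    simp only [smul_eq_mul, hinner]
    congr 1
    have : -2 * π * (v * (x * (2 * π)⁻¹)) = -(v * x) := by
      field_simp
    rw [this]
    push_cast
    ring_nf
  set g : ℝ → ℂ := fun x => (1 / (2 * π) : ℂ) * 𝓕 φhat (x * (2 * π)⁻¹) with hg
  have hcont : Continuous g := by
    apply continuous_const.mul
    exact (VectorFourier.fourierIntegral_continuous Real.continuous_fourierChar
      (by exact continuous_inner) hφhat_int).comp (continuous_id.mul continuous_const)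
  have htend : Tendsto g (cocompact ℝ) (𝓝 0) := by
    have h1 : Tendsto (fun x : ℝ => x * (2 * π)⁻¹) (cocompact ℝ) (cocompact ℝ) :=
      (Homeomorph.mulRight₀ (2 * π)⁻¹ (by positivity)).toCocompactMap.cocompact_tendsto'
    have := ((Real.zero_at_infty_fourier φhat).comp h1).const_mul (1 / (2 * π) : ℂ)
    rw [mul_zero] at this
    exact this
  refine ⟨g, ?_, hcont.uniformContinuous_of_tendsto_cocompact htend,
    ⟨‖(1 / (2 * π) : ℂ)‖ * ∫ p, ‖φhat p‖, fun x => ?_⟩, htend⟩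
  · filter_upwards [hinv] with x hx
    rw [hg]; simp only []; rw [hgeq x, hx]
  · calc ‖(1 / (2 * π) : ℂ) * 𝓕 φhat (x * (2 * π)⁻¹)‖
        = ‖(1 / (2 * π) : ℂ)‖ * ‖𝓕 φhat (x * (2 * π)⁻¹)‖ := norm_mul _ _
      _ ≤ ‖(1 / (2 * π) : ℂ)‖ * ∫ p, ‖φhat p‖ := by
          gcongr
          exact VectorFourier.norm_fourierIntegral_le_integral_norm _ _ _ _ _
end

section
/- The operator 𝒜_μ defined on 𝒟(𝒜_μ) = {φ + C ψ_ν(·-a) : φ ∈ V₂¹(ℝ), φ(a) = 0, C ∈ ℝ} by 𝒜_μ(φ + C ψ_ν(·-a)) = 𝒜φ + ν C ψ_ν(·-a) acts on the Fourier side by (𝒜_μ u)^(p) = -Ψ(p) û(p) + μ u(a) e^{ipa}. -/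
open MeasureTheory Real

/-- Fourier-side action of `𝒜_μ`: for `u = φ + C ψ_ν(·-a)` with `φ ∈ V₂¹(ℝ)`, `φ(a) = 0`,
the operator `𝒜_μ u = 𝒜φ + ν C ψ_ν(·-a)` satisfies
`(𝒜_μ u)^(p) = -Ψ(p) û(p) + μ u(a) e^{ipa}`, where `u(a)` is the value at `a` of the
continuous representative, obtained by Fourier inversion. -/
theorem stmt11 (Ψ : ℝ → ℝ) (hcont : Continuous Ψ) (heven : ∀ p, Ψ (-p) = Ψ p)
    (hnonneg : ∀ p, 0 ≤ Ψ p)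
    (hint : Integrable (fun p => 1 / (1 + Ψ p)))
    (μ ν : ℝ) (hμ : 0 < μ) (hν : 0 < ν)
    (hμν : μ / (2 * π) * ∫ p, 1 / (Ψ p + ν) = 1)
    (a : ℝ) (C : ℂ)
    (φhat : ℝ → ℂ) (hφhat : Measurable φhat)
    (hφint : Integrable φhat)
    (hweight : Integrable (fun p => (1 + Ψ p ^ 2) * ‖φhat p‖ ^ 2))
    (hφa : (1 / (2 * π) : ℂ) * ∫ p : ℝ, Complex.exp (-(Complex.I * p * a)) * φhat p = 0)
    (uhat : ℝ → ℂ)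
    (huhat : ∀ p, uhat p = φhat p + C * Complex.exp (Complex.I * p * a) / ((Ψ p : ℂ) + ν))
    (ua : ℂ)
    (hua : ua = (1 / (2 * π) : ℂ) * ∫ p : ℝ, Complex.exp (-(Complex.I * p * a)) * uhat p) :
    ∀ p : ℝ, -(Ψ p : ℂ) * φhat p + ν * C * Complex.exp (Complex.I * p * a) / ((Ψ p : ℂ) + ν)
      = -(Ψ p : ℂ) * uhat p + μ * ua * Complex.exp (Complex.I * p * a) := by
  have hpos : ∀ p, (0:ℝ) < Ψ p + ν := fun p => by have := hnonneg p; linarith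
  -- integrability of 1/(Ψ+ν)
  have hint2 : Integrable (fun p => 1 / (Ψ p + ν)) := by
    refine hint.const_mul (max 1 (1/ν)) |>.mono' ?_
      (Filter.Eventually.of_forall fun p => ?_)
    · simpa [one_div, Pi.inv_def, Pi.add_def] using
        ((hcont.add continuous_const).inv₀ (fun p => (hpos p).ne')).aestronglyMeasurable
    · have h1 : (0:ℝ) < 1 + Ψ p := by have := hnonneg p; linarith
      rw [Real.norm_eq_abs, abs_of_pos (div_pos one_pos (hpos p)), mul_one_div,
        div_le_div_iff₀ (hpos p) h1]
      have h2 : Ψ p ≤ max 1 (1/ν) * Ψ p := le_mul_of_one_le_left (hnonneg p) (le_max_left _ _)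
      have h3 : (1:ℝ) ≤ max 1 (1/ν) * ν := by
        calc (1:ℝ) = (1/ν) * ν := by field_simp
        _ ≤ _ := by gcongr; exact le_max_right _ _
      nlinarith [hnonneg p]
  -- first integrand integrable
  have hmeas1 : AEStronglyMeasurable (fun p : ℝ => Complex.exp (-(Complex.I * p * a)) * φhat p) volume := by
    exact ((Complex.continuous_exp.comp (by continuity)).measurable.mul hφhat).aestronglyMeasurable
  have hintA : Integrable (fun p : ℝ => Complex.exp (-(Complex.I * p * a)) * φhat p) := by
    refine hφint.bdd_mul ?_ (c := 1) (Filter.Eventually.of_forall fun p => ?_)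
    · exact (Complex.continuous_exp.comp (by continuity)).aestronglyMeasurable
    · rw [Complex.norm_exp]
      simp [Complex.mul_re, Complex.mul_im]
  have hintB : Integrable (fun p : ℝ => (C : ℂ) * ((1 / (Ψ p + ν) : ℝ) : ℂ)) :=
    (hint2.ofReal.const_mul C)
  -- value of ua
  have key : ∀ p : ℝ, Complex.exp (-(Complex.I * p * a)) * uhat p
      = Complex.exp (-(Complex.I * p * a)) * φhat p + C * ((1 / (Ψ p + ν) : ℝ) : ℂ) := by
    intro p
    have hne : ((Ψ p : ℂ) + ν) ≠ 0 := by
      have : ((Ψ p + ν : ℝ) : ℂ) ≠ 0 := Complex.ofReal_ne_zero.mpr (hpos p).ne'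
      simpa using this
    rw [huhat p]
    push_cast
    rw [mul_add]
    congr 1
    rw [mul_div_assoc', show Complex.exp (-(Complex.I*p*a)) * (C * Complex.exp (Complex.I*p*a)) = C by
      rw [mul_comm C, ← mul_assoc, ← Complex.exp_add]; simp, one_div, div_eq_mul_inv]
  have hua2 : ua = (1 / (2 * π) : ℂ) * (C * ((∫ p, 1 / (Ψ p + ν)) : ℝ)) := by
    rw [hua]
    have : (∫ p : ℝ, Complex.exp (-(Complex.I * p * a)) * uhat p)
        = (∫ p : ℝ, Complex.exp (-(Complex.I * p * a)) * φhat p) + ∫ p : ℝ, (C : ℂ) * ((1 / (Ψ p + ν) : ℝ) : ℂ) := by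
      rw [← integral_add hintA hintB]
      exact integral_congr_ae (Filter.Eventually.of_forall key)
    rw [this, mul_add]
    have h0 : (1 / (2 * π) : ℂ) * (∫ p : ℝ, Complex.exp (-(Complex.I * p * a)) * φhat p) = 0 := hφa
    rw [h0, zero_add]
    congr 1
    rw [integral_const_mul]
    congr 1
    exact integral_ofReal
  have hmua : (μ : ℂ) * ua = C := by
    rw [hua2]
    have : (μ : ℂ) * ((1 / (2 * π) : ℂ) * (C * ((∫ p, 1 / (Ψ p + ν)) : ℝ)))
        = C * ((μ / (2 * π) * ∫ p, 1 / (Ψ p + ν) : ℝ) : ℂ) := by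
      push_cast; ring
    rw [this, hμν]; simp
  intro p
  have hne : ((Ψ p : ℂ) + ν) ≠ 0 := by
    have : ((Ψ p + ν : ℝ) : ℂ) ≠ 0 := Complex.ofReal_ne_zero.mpr (hpos p).ne'
    simpa using this
  rw [huhat p, hmua]
  field_simp
  ring
end

section
/- The operator 𝒜_μ is symmetric: for all u, v ∈ 𝒟(𝒜_μ), (𝒜_μ u, v)_{L²} = (u, 𝒜_μ v)_{L²}. -/
open MeasureTheory Real

lemma aux_le (t x : ℝ) (ht : 0 ≤ t) (hx : 0 ≤ x) :
    x ≤ 1 / (2 * (1 + t)) + (1 + t ^ 2) * x ^ 2 := by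
  have h1 : (0:ℝ) < 1 + t := by linarith
  rw [div_add' _ _ _ (by positivity), le_div_iff₀ (by positivity)]
  nlinarith [sq_nonneg ((1 + t) * x - 1), sq_nonneg x, sq_nonneg (t * x),
    mul_nonneg ht (sq_nonneg (t * x))]

lemma key_alg (M G d t a b c₁ c₂ ν : ℝ) (hc₁ : 0 ≤ c₁) (hc₂ : 0 ≤ c₂)
    (htab : t * a * b ≤ G) (F2 : a * (ν * d) ≤ G) (F3 : b * (t * d) ≤ G)
    (F4 : ν * d ^ 2 ≤ M * G) :
    (a + c₁ * d) * (t * b + ν * c₂ * d) ≤ (1 + c₁ + c₂ + c₁ * c₂ * M) * G := by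
  nlinarith [mul_le_mul_of_nonneg_left F2 hc₂, mul_le_mul_of_nonneg_left F3 hc₁,
    mul_le_mul_of_nonneg_left F4 (mul_nonneg hc₁ hc₂), htab]

lemma prod_bound (ν t a b c₁ c₂ : ℝ) (hν : 0 < ν) (ht : 0 ≤ t) (ha : 0 ≤ a)
    (hb : 0 ≤ b) (hc₁ : 0 ≤ c₁) (hc₂ : 0 ≤ c₂) :
    (a + c₁ / (t + ν)) * (t * b + ν * c₂ / (t + ν)) ≤
      (1 + c₁ + c₂ + c₁ * c₂ * max 1 ν⁻¹) * (1 / (1 + t) + (1 + t ^ 2) * (a ^ 2 + b ^ 2)) := by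
  have hD : (0:ℝ) < t + ν := by linarith
  have h1t : (0:ℝ) < 1 + t := by linarith
  have hM1 : (1:ℝ) ≤ max 1 ν⁻¹ := le_max_left _ _
  have hM0 : (0:ℝ) ≤ max 1 ν⁻¹ := by linarith
  have hGe : 1 / (1 + t) ≤ 1 / (1 + t) + (1 + t ^ 2) * (a ^ 2 + b ^ 2) :=
    le_add_of_nonneg_right (by positivity)
  have h2 : 1 / (2 * (1 + t)) ≤ 1 / (1 + t) := by
    rw [div_le_div_iff₀ (by positivity) h1t]; nlinarith
  have haG : a ≤ 1 / (1 + t) + (1 + t ^ 2) * (a ^ 2 + b ^ 2) := by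
    refine (aux_le t a ht ha).trans ?_
    nlinarith [sq_nonneg b, sq_nonneg t, sq_nonneg (t * b)]
  have hbG : b ≤ 1 / (1 + t) + (1 + t ^ 2) * (a ^ 2 + b ^ 2) := by
    refine (aux_le t b ht hb).trans ?_
    nlinarith [sq_nonneg a, sq_nonneg t, sq_nonneg (t * a)]
  have htab : t * a * b ≤ 1 / (1 + t) + (1 + t ^ 2) * (a ^ 2 + b ^ 2) := by
    have h1 : (0:ℝ) ≤ 1 + t ^ 2 - t := by nlinarith [sq_nonneg (t - 1)]
    nlinarith [mul_nonneg ht (sq_nonneg (a - b)),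
      mul_nonneg h1 (by positivity : (0:ℝ) ≤ a ^ 2 + b ^ 2), (by positivity : (0:ℝ) ≤ 1/(1+t))]
  have hd0 : (0:ℝ) ≤ (t + ν)⁻¹ := by positivity
  have hd1 : (t + ν)⁻¹ * (t + ν) = 1 := inv_mul_cancel₀ hD.ne'
  have hνd : ν * (t + ν)⁻¹ ≤ 1 := by nlinarith [mul_nonneg ht hd0]
  have htd : t * (t + ν)⁻¹ ≤ 1 := by nlinarith [mul_nonneg hν.le hd0]
  have hMe : (t + ν)⁻¹ ≤ max 1 ν⁻¹ * (1 / (1 + t)) := by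
    rw [mul_one_div, inv_eq_one_div, div_le_div_iff₀ hD h1t]
    have h4 : 1 ≤ max 1 ν⁻¹ * ν := by
      have := mul_le_mul_of_nonneg_right (le_max_right 1 ν⁻¹) hν.le
      rwa [inv_mul_cancel₀ hν.ne'] at this
    nlinarith
  rw [div_eq_mul_inv c₁, div_eq_mul_inv (ν * c₂)]
  refine key_alg _ _ _ _ _ _ _ _ _ hc₁ hc₂ htab ?_ ?_ ?_
  · calc a * (ν * (t + ν)⁻¹) ≤ a * 1 := mul_le_mul_of_nonneg_left hνd ha
      _ = a := mul_one a
      _ ≤ _ := haG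
  · calc b * (t * (t + ν)⁻¹) ≤ b * 1 := mul_le_mul_of_nonneg_left htd hb
      _ = b := mul_one b
      _ ≤ _ := hbG
  · have h5 : ν * ((t + ν)⁻¹) ^ 2 ≤ (t + ν)⁻¹ := by
      have h7 := mul_le_mul_of_nonneg_right hνd hd0
      calc ν * ((t + ν)⁻¹) ^ 2 = ν * (t + ν)⁻¹ * (t + ν)⁻¹ := by ring
        _ ≤ 1 * (t + ν)⁻¹ := h7
        _ = (t + ν)⁻¹ := one_mul _
    have h6 : max 1 ν⁻¹ * (1 / (1 + t)) ≤ max 1 ν⁻¹ * (1 / (1 + t) + (1 + t ^ 2) * (a ^ 2 + b ^ 2)) :=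
      mul_le_mul_of_nonneg_left hGe hM0
    linarith


/-- Symmetry of `𝒜_μ`: for `u = φ₁ + C₁ ψ_ν(·-a)` and `v = φ₂ + C₂ ψ_ν(·-a)` in
`𝒟(𝒜_μ)` (so `φᵢ ∈ V₂¹(ℝ)` with `φᵢ(a) = 0`), one has `(𝒜_μ u, v) = (u, 𝒜_μ v)` in
`L²(ℝ)`; via Plancherel this is the Fourier-side identity stated below, where
`(𝒜_μ u)^(p) = -Ψ(p) φ̂₁(p) + ν C₁ e^{ipa}/(Ψ(p)+ν)` and
`û(p) = φ̂₁(p) + C₁ e^{ipa}/(Ψ(p)+ν)`, and similarly for `v`. -/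
theorem stmt12 (Ψ : ℝ → ℝ) (hcont : Continuous Ψ) (heven : ∀ p, Ψ (-p) = Ψ p)
    (hnonneg : ∀ p, 0 ≤ Ψ p)
    (hint : Integrable (fun p => 1 / (1 + Ψ p)))
    (μ ν : ℝ) (hμ : 0 < μ) (hν : 0 < ν)
    (hμν : μ / (2 * π) * ∫ p, 1 / (Ψ p + ν) = 1)
    (a : ℝ) (C₁ C₂ : ℂ)
    (φ₁ φ₂ : ℝ → ℂ) (hφ₁ : Measurable φ₁) (hφ₂ : Measurable φ₂)
    (hw₁ : Integrable (fun p => (1 + Ψ p ^ 2) * ‖φ₁ p‖ ^ 2))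
    (hw₂ : Integrable (fun p => (1 + Ψ p ^ 2) * ‖φ₂ p‖ ^ 2))
    (ha₁ : (∫ p : ℝ, Complex.exp (-(Complex.I * p * a)) * φ₁ p) = 0)
    (ha₂ : (∫ p : ℝ, Complex.exp (-(Complex.I * p * a)) * φ₂ p) = 0) :
    ∫ p : ℝ,
        (-(Ψ p : ℂ) * φ₁ p + ν * C₁ * Complex.exp (Complex.I * p * a) / ((Ψ p : ℂ) + ν)) *
          (starRingEnd ℂ)
            (φ₂ p + C₂ * Complex.exp (Complex.I * p * a) / ((Ψ p : ℂ) + ν))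
      = ∫ p : ℝ,
        (φ₁ p + C₁ * Complex.exp (Complex.I * p * a) / ((Ψ p : ℂ) + ν)) *
          (starRingEnd ℂ)
            (-(Ψ p : ℂ) * φ₂ p + ν * C₂ * Complex.exp (Complex.I * p * a) / ((Ψ p : ℂ) + ν)) := by
  have hΨm : Measurable Ψ := hcont.measurable
  have hDpos : ∀ p, 0 < Ψ p + ν := fun p => by have := hnonneg p; linarith
  have hcast : ∀ p, ((Ψ p : ℂ) + ν) = ((Ψ p + ν : ℝ) : ℂ) := fun p => by push_cast; ring
  have hDc : ∀ p : ℝ, ((Ψ p : ℂ) + ν) ≠ 0 := fun p => by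
    rw [hcast p]; exact_mod_cast (hDpos p).ne'
  have normDc : ∀ p, ‖((Ψ p : ℂ) + ν)‖ = Ψ p + ν := fun p => by
    rw [hcast p, Complex.norm_real, Real.norm_eq_abs, abs_of_pos (hDpos p)]
  have normE : ∀ p : ℝ, ‖Complex.exp (Complex.I * p * a)‖ = 1 := fun p => by
    simp [Complex.norm_exp]
  have normE' : ∀ p : ℝ, ‖Complex.exp (-(Complex.I * p * a))‖ = 1 := fun p => by
    simp [Complex.norm_exp]
  have hEconj : ∀ p : ℝ, (starRingEnd ℂ) (Complex.exp (Complex.I * p * a))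
      = Complex.exp (-(Complex.I * p * a)) := fun p => by
    rw [← Complex.exp_conj]; congr 1
    simp [map_mul, Complex.conj_I, Complex.conj_ofReal]
  have hEconj' : ∀ p : ℝ, (starRingEnd ℂ) (Complex.exp (-(Complex.I * p * a)))
      = Complex.exp (Complex.I * p * a) := fun p => by
    rw [← Complex.exp_conj]; congr 1
    simp [map_mul, Complex.conj_I, Complex.conj_ofReal]
  -- measurability helpers
  have hexp_m : Measurable fun p : ℝ => Complex.exp (Complex.I * p * a) :=
    (Complex.continuous_exp.comp
      ((continuous_const.mul Complex.continuous_ofReal).mul continuous_const)).measurable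
  have hexp_m' : Measurable fun p : ℝ => Complex.exp (-(Complex.I * p * a)) :=
    (Complex.continuous_exp.comp
      ((continuous_const.mul Complex.continuous_ofReal).mul continuous_const).neg).measurable
  have hX_m : Measurable fun p : ℝ => ((Ψ p : ℂ) + ν) :=
    (Complex.measurable_ofReal.comp hΨm).add measurable_const
  have hconj_m : Measurable fun z : ℂ => (starRingEnd ℂ) z :=
    (RCLike.continuous_conj (K := ℂ)).measurable
  -- L¹ bounds for φᵢ
  have hL1 : ∀ (φ : ℝ → ℂ), Measurable φ →
      Integrable (fun p => (1 + Ψ p ^ 2) * ‖φ p‖ ^ 2) → Integrable φ := by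
    intro φ hm hw
    refine Integrable.mono' ((hint.const_mul (1/2)).add hw) hm.aestronglyMeasurable
      (ae_of_all _ fun p => ?_)
    have h := aux_le (Ψ p) ‖φ p‖ (hnonneg p) (norm_nonneg _)
    have e : (1:ℝ)/2 * (1/(1 + Ψ p)) = 1/(2 * (1 + Ψ p)) := by
      rw [div_mul_div_comm, one_mul]
    simp only [Pi.add_apply]
    rw [e]; exact h
  have hφ₁L1 : Integrable φ₁ := hL1 φ₁ hφ₁ hw₁
  have hφ₂L1 : Integrable φ₂ := hL1 φ₂ hφ₂ hw₂
  -- dominating function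
  have hG_int : Integrable (fun p => 1/(1 + Ψ p) + (1 + Ψ p ^ 2) * (‖φ₁ p‖^2 + ‖φ₂ p‖^2)) := by
    refine hint.add ?_
    have e : (fun p => (1 + Ψ p ^ 2) * (‖φ₁ p‖^2 + ‖φ₂ p‖^2))
        = fun p => (1 + Ψ p ^ 2) * ‖φ₁ p‖^2 + (1 + Ψ p ^ 2) * ‖φ₂ p‖^2 := by
      funext p; ring
    rw [e]; exact hw₁.add hw₂
  -- integrability of the RHS integrand
  have hg_m : AEStronglyMeasurable (fun p : ℝ =>
      (φ₁ p + C₁ * Complex.exp (Complex.I * p * a) / ((Ψ p : ℂ) + ν)) *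
        (starRingEnd ℂ)
          (-(Ψ p : ℂ) * φ₂ p + ν * C₂ * Complex.exp (Complex.I * p * a) / ((Ψ p : ℂ) + ν))) volume := by
    apply Measurable.aestronglyMeasurable
    exact (hφ₁.add ((measurable_const.mul hexp_m).div hX_m)).mul
      (hconj_m.comp (((Complex.measurable_ofReal.comp hΨm).neg.mul hφ₂).add
        ((measurable_const.mul hexp_m).div hX_m)))
  have hg_int : Integrable (fun p : ℝ =>
      (φ₁ p + C₁ * Complex.exp (Complex.I * p * a) / ((Ψ p : ℂ) + ν)) *
        (starRingEnd ℂ)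
          (-(Ψ p : ℂ) * φ₂ p + ν * C₂ * Complex.exp (Complex.I * p * a) / ((Ψ p : ℂ) + ν))) := by
    refine Integrable.mono'
      (hG_int.const_mul (1 + ‖C₁‖ + ‖C₂‖ + ‖C₁‖ * ‖C₂‖ * max 1 ν⁻¹)) hg_m
      (ae_of_all _ fun p => ?_)
    have hu : ‖φ₁ p + C₁ * Complex.exp (Complex.I * p * a) / ((Ψ p : ℂ) + ν)‖
        ≤ ‖φ₁ p‖ + ‖C₁‖ / (Ψ p + ν) := by
      refine (norm_add_le _ _).trans ?_
      rw [norm_div, norm_mul, normE p, normDc p, mul_one]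
    have hw : ‖-(Ψ p : ℂ) * φ₂ p + ν * C₂ * Complex.exp (Complex.I * p * a) / ((Ψ p : ℂ) + ν)‖
        ≤ Ψ p * ‖φ₂ p‖ + ν * ‖C₂‖ / (Ψ p + ν) := by
      refine (norm_add_le _ _).trans ?_
      rw [norm_mul, norm_neg, norm_div, norm_mul, norm_mul, normE p, normDc p, mul_one,
        Complex.norm_real, Complex.norm_real, Real.norm_eq_abs, Real.norm_eq_abs,
        abs_of_nonneg (hnonneg p), abs_of_pos hν]
    rw [norm_mul, RCLike.norm_conj]
    calc ‖φ₁ p + C₁ * Complex.exp (Complex.I * p * a) / ((Ψ p : ℂ) + ν)‖ *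
          ‖-(Ψ p : ℂ) * φ₂ p + ν * C₂ * Complex.exp (Complex.I * p * a) / ((Ψ p : ℂ) + ν)‖
        ≤ (‖φ₁ p‖ + ‖C₁‖ / (Ψ p + ν)) * (Ψ p * ‖φ₂ p‖ + ν * ‖C₂‖ / (Ψ p + ν)) :=
          mul_le_mul hu hw (norm_nonneg _)
            (add_nonneg (norm_nonneg _) (div_nonneg (norm_nonneg _) (hDpos p).le))
      _ ≤ (1 + ‖C₁‖ + ‖C₂‖ + ‖C₁‖ * ‖C₂‖ * max 1 ν⁻¹) *
          (1/(1 + Ψ p) + (1 + Ψ p ^ 2) * (‖φ₁ p‖^2 + ‖φ₂ p‖^2)) :=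
          prod_bound ν (Ψ p) ‖φ₁ p‖ ‖φ₂ p‖ ‖C₁‖ ‖C₂‖ hν (hnonneg p) (norm_nonneg _)
            (norm_nonneg _) (norm_nonneg _) (norm_nonneg _)
  -- the correction term
  have hA_int : Integrable (fun p : ℝ =>
      C₁ * (Complex.exp (Complex.I * p * a) * (starRingEnd ℂ) (φ₂ p))) := by
    refine Integrable.const_mul ?_ C₁
    refine Integrable.mono' hφ₂L1.norm
      (Measurable.aestronglyMeasurable (hexp_m.mul (hconj_m.comp hφ₂))) (ae_of_all _ fun p => ?_)
    rw [norm_mul, normE p, one_mul, RCLike.norm_conj]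
  have hB_int : Integrable (fun p : ℝ =>
      (starRingEnd ℂ) C₂ * (Complex.exp (-(Complex.I * p * a)) * φ₁ p)) := by
    refine Integrable.const_mul ?_ _
    refine Integrable.mono' hφ₁L1.norm
      (Measurable.aestronglyMeasurable (hexp_m'.mul hφ₁)) (ae_of_all _ fun p => ?_)
    rw [norm_mul, normE' p, one_mul]
  have hh_int : Integrable (fun p : ℝ =>
      C₁ * (Complex.exp (Complex.I * p * a) * (starRingEnd ℂ) (φ₂ p))
        - (starRingEnd ℂ) C₂ * (Complex.exp (-(Complex.I * p * a)) * φ₁ p)) :=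
    hA_int.sub hB_int
  have hA0 : (∫ p : ℝ, Complex.exp (Complex.I * p * a) * (starRingEnd ℂ) (φ₂ p)) = 0 := by
    have e : (fun p : ℝ => Complex.exp (Complex.I * p * a) * (starRingEnd ℂ) (φ₂ p))
        = fun p : ℝ => (starRingEnd ℂ) (Complex.exp (-(Complex.I * p * a)) * φ₂ p) := by
      funext p; rw [map_mul, hEconj' p]
    rw [e, integral_conj, ha₂, map_zero]
  have hh0 : (∫ p : ℝ,
      (C₁ * (Complex.exp (Complex.I * p * a) * (starRingEnd ℂ) (φ₂ p))
        - (starRingEnd ℂ) C₂ * (Complex.exp (-(Complex.I * p * a)) * φ₁ p))) = 0 := by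
    rw [integral_sub hA_int hB_int, integral_const_mul, integral_const_mul, hA0, ha₁,
      mul_zero, mul_zero, sub_zero]
  -- pointwise decomposition
  have hfg : ∀ p : ℝ,
      (-(Ψ p : ℂ) * φ₁ p + ν * C₁ * Complex.exp (Complex.I * p * a) / ((Ψ p : ℂ) + ν)) *
        (starRingEnd ℂ) (φ₂ p + C₂ * Complex.exp (Complex.I * p * a) / ((Ψ p : ℂ) + ν))
      = (φ₁ p + C₁ * Complex.exp (Complex.I * p * a) / ((Ψ p : ℂ) + ν)) *
          (starRingEnd ℂ)
            (-(Ψ p : ℂ) * φ₂ p + ν * C₂ * Complex.exp (Complex.I * p * a) / ((Ψ p : ℂ) + ν))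
        + (C₁ * (Complex.exp (Complex.I * p * a) * (starRingEnd ℂ) (φ₂ p))
            - (starRingEnd ℂ) C₂ * (Complex.exp (-(Complex.I * p * a)) * φ₁ p)) := by
    intro p
    simp only [map_add, map_mul, map_div₀, map_neg, Complex.conj_ofReal, hEconj p]
    field_simp [hDc p]
    ring
  calc (∫ p : ℝ,
        (-(Ψ p : ℂ) * φ₁ p + ν * C₁ * Complex.exp (Complex.I * p * a) / ((Ψ p : ℂ) + ν)) *
          (starRingEnd ℂ) (φ₂ p + C₂ * Complex.exp (Complex.I * p * a) / ((Ψ p : ℂ) + ν)))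
      = ∫ p : ℝ,
          ((φ₁ p + C₁ * Complex.exp (Complex.I * p * a) / ((Ψ p : ℂ) + ν)) *
            (starRingEnd ℂ)
              (-(Ψ p : ℂ) * φ₂ p + ν * C₂ * Complex.exp (Complex.I * p * a) / ((Ψ p : ℂ) + ν))
          + (C₁ * (Complex.exp (Complex.I * p * a) * (starRingEnd ℂ) (φ₂ p))
              - (starRingEnd ℂ) C₂ * (Complex.exp (-(Complex.I * p * a)) * φ₁ p))) := by
        exact integral_congr_ae (ae_of_all _ hfg)
    _ = (∫ p : ℝ,
          (φ₁ p + C₁ * Complex.exp (Complex.I * p * a) / ((Ψ p : ℂ) + ν)) *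
            (starRingEnd ℂ)
              (-(Ψ p : ℂ) * φ₂ p + ν * C₂ * Complex.exp (Complex.I * p * a) / ((Ψ p : ℂ) + ν)))
        + ∫ p : ℝ,
            (C₁ * (Complex.exp (Complex.I * p * a) * (starRingEnd ℂ) (φ₂ p))
              - (starRingEnd ℂ) C₂ * (Complex.exp (-(Complex.I * p * a)) * φ₁ p)) :=
        integral_add hg_int hh_int
    _ = _ := by rw [hh0, add_zero]
end

section
/- The quadratic form a_μ[u,u] = ‖(-𝒜)^{1/2} u‖₂² - μ |u(a)|², defined for u ∈ V₂^{1/2}(ℝ), is semi-bounded from below: a_μ[u,u] ≥ -ν ‖u‖₂² for all u ∈ V₂^{1/2}(ℝ), where ν is the unique positive number with (μ/2π) ∫ dp/(Ψ(p)+ν) = 1. -/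
open MeasureTheory Real

/-- Semi-boundedness from below of the form
`a_μ[u,u] = ‖(-𝒜)^{1/2}u‖₂² - μ|u(a)|²` on `V₂^{1/2}(ℝ)`:
`a_μ[u,u] ≥ -ν ‖u‖₂²`, stated on the Fourier side where
`‖(-𝒜)^{1/2}u‖₂² = (1/2π)∫ Ψ|û|²`, `‖u‖₂² = (1/2π)∫ |û|²` and
`u(a) = (1/2π)∫ e^{-ipa} û(p) dp`, and `ν > 0` is determined by
`(μ/2π)∫ dp/(Ψ(p)+ν) = 1`. -/
theorem stmt13 (Ψ : ℝ → ℝ) (hcont : Continuous Ψ) (heven : ∀ p, Ψ (-p) = Ψ p)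
    (hnonneg : ∀ p, 0 ≤ Ψ p)
    (hint : Integrable (fun p => 1 / (1 + Ψ p)))
    (μ ν : ℝ) (hμ : 0 < μ) (hν : 0 < ν)
    (hμν : μ / (2 * π) * ∫ p, 1 / (Ψ p + ν) = 1)
    (a : ℝ)
    (uhat : ℝ → ℂ) (huhat : Measurable uhat)
    (hweight : Integrable (fun p => (1 + Ψ p) * ‖uhat p‖ ^ 2)) :
    (1 / (2 * π)) * (∫ p, Ψ p * ‖uhat p‖ ^ 2)
        - μ * ‖(1 / (2 * π) : ℂ) * ∫ p : ℝ, Complex.exp (-(Complex.I * p * a)) * uhat p‖ ^ 2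
      ≥ -ν * ((1 / (2 * π)) * ∫ p, ‖uhat p‖ ^ 2) := by
  have hπ : (0:ℝ) < π := Real.pi_pos
  have hpos : ∀ p, (0:ℝ) < Ψ p + ν := fun p => by linarith [hnonneg p]
  -- integrability of 1/(Ψ+ν)
  have hintC : Integrable (fun p => 1 / (Ψ p + ν)) := by
    refine Integrable.mono' ((hint.const_mul (max 1 ν⁻¹))) ?_ ?_
    · exact ((continuous_const.div (hcont.add continuous_const)
        (fun p => (hpos p).ne')).aestronglyMeasurable)
    · refine Filter.Eventually.of_forall fun p => ?_
      have h1 : (0:ℝ) < 1 + Ψ p := by linarith [hnonneg p]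
      have hM1 : (1:ℝ) ≤ max 1 ν⁻¹ := le_max_left _ _
      have hM2 : ν⁻¹ ≤ max 1 ν⁻¹ := le_max_right _ _
      rw [Real.norm_of_nonneg (div_nonneg zero_le_one (hpos p).le)]
      rw [div_le_iff₀ (hpos p), mul_comm (max 1 ν⁻¹), mul_assoc, div_mul_eq_mul_div,
        one_mul, le_div_iff₀ h1, one_mul]
      have : (1:ℝ) ≤ max 1 ν⁻¹ * ν := by
        calc (1:ℝ) = ν⁻¹ * ν := by field_simp
        _ ≤ max 1 ν⁻¹ * ν := by nlinarith
      nlinarith [hnonneg p]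
  -- basic integrabilities
  have hmeasn : AEStronglyMeasurable (fun p => ‖uhat p‖ ^ 2) volume :=
    ((huhat.norm.pow_const 2)).aestronglyMeasurable
  have hint2 : Integrable (fun p => ‖uhat p‖ ^ 2) := by
    refine Integrable.mono' hweight hmeasn (Filter.Eventually.of_forall fun p => ?_)
    rw [Real.norm_of_nonneg (by positivity)]
    nlinarith [hnonneg p, sq_nonneg ‖uhat p‖]
  have hintΨ : Integrable (fun p => Ψ p * ‖uhat p‖ ^ 2) := by
    refine Integrable.mono' hweight
      ((hcont.aestronglyMeasurable.mul hmeasn)) (Filter.Eventually.of_forall fun p => ?_)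
    rw [Real.norm_of_nonneg (mul_nonneg (hnonneg p) (by positivity))]
    nlinarith [hnonneg p, sq_nonneg ‖uhat p‖]
  have hintS : Integrable (fun p => (Ψ p + ν) * ‖uhat p‖ ^ 2) := by
    have := hintΨ.add (hint2.const_mul ν)
    refine this.congr (Filter.Eventually.of_forall fun p => ?_)
    simp only [Pi.add_apply]
    ring
  set C := ∫ p, 1 / (Ψ p + ν) with hC
  set S := ∫ p, (Ψ p + ν) * ‖uhat p‖ ^ 2 with hS
  have hCnonneg : 0 ≤ C := integral_nonneg fun p => div_nonneg zero_le_one (hpos p).le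
  have hSnonneg : 0 ≤ S := integral_nonneg fun p => mul_nonneg (hpos p).le (by positivity)
  -- Cauchy-Schwarz
  have hconj : Real.HolderConjugate 2 2 := Real.HolderConjugate.two_two
  have hf : MemLp (fun p => Real.sqrt (1 / (Ψ p + ν))) 2 volume := by
    have hsm : AEStronglyMeasurable (fun p => Real.sqrt (1 / (Ψ p + ν))) volume :=
      ((continuous_const.div (hcont.add continuous_const)
        (fun p => (hpos p).ne')).sqrt).aestronglyMeasurable
    refine (memLp_two_iff_integrable_sq hsm).2 ?_
    refine hintC.congr (Filter.Eventually.of_forall fun p => ?_)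
    show (1:ℝ) / (Ψ p + ν) = Real.sqrt (1 / (Ψ p + ν)) ^ 2
    rw [Real.sq_sqrt (div_nonneg zero_le_one (hpos p).le)]
  have hg : MemLp (fun p => Real.sqrt (Ψ p + ν) * ‖uhat p‖) 2 volume := by
    have hsm : AEStronglyMeasurable (fun p => Real.sqrt (Ψ p + ν) * ‖uhat p‖) volume :=
      ((hcont.add continuous_const).sqrt.aestronglyMeasurable).mul
        huhat.norm.aestronglyMeasurable
    refine (memLp_two_iff_integrable_sq hsm).2 ?_
    refine hintS.congr (Filter.Eventually.of_forall fun p => ?_)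
    show (Ψ p + ν) * ‖uhat p‖ ^ 2 = (Real.sqrt (Ψ p + ν) * ‖uhat p‖) ^ 2
    rw [mul_pow, Real.sq_sqrt (hpos p).le]
  have hCS := integral_mul_le_Lp_mul_Lq_of_nonneg hconj
    (Filter.Eventually.of_forall fun p => Real.sqrt_nonneg _)
    (Filter.Eventually.of_forall fun p =>
      mul_nonneg (Real.sqrt_nonneg _) (norm_nonneg _))
    ((by norm_num : ENNReal.ofReal 2 = 2) ▸ hf)
    ((by norm_num : ENNReal.ofReal 2 = 2) ▸ hg)
  have hfg : ∀ p, Real.sqrt (1 / (Ψ p + ν)) * (Real.sqrt (Ψ p + ν) * ‖uhat p‖)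
      = ‖uhat p‖ := by
    intro p
    rw [one_div, Real.sqrt_inv, ← mul_assoc,
      inv_mul_cancel₀ (Real.sqrt_ne_zero'.2 (hpos p)), one_mul]
  have hKey : (∫ p, ‖uhat p‖) ≤ Real.sqrt C * Real.sqrt S := by
    have h1 : (∫ p, ‖uhat p‖) =
        ∫ p, Real.sqrt (1 / (Ψ p + ν)) * (Real.sqrt (Ψ p + ν) * ‖uhat p‖) := by
      exact (integral_congr_ae (Filter.Eventually.of_forall fun p => (hfg p))).symm
    have h2 : (∫ p, Real.sqrt (1 / (Ψ p + ν)) ^ (2:ℝ)) = C := by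
      refine integral_congr_ae (Filter.Eventually.of_forall fun p => ?_)
      show Real.sqrt (1 / (Ψ p + ν)) ^ (2:ℝ) = 1 / (Ψ p + ν)
      rw [Real.rpow_two, Real.sq_sqrt (div_nonneg zero_le_one (hpos p).le)]
    have h3 : (∫ p, (Real.sqrt (Ψ p + ν) * ‖uhat p‖) ^ (2:ℝ)) = S := by
      refine integral_congr_ae (Filter.Eventually.of_forall fun p => ?_)
      show (Real.sqrt (Ψ p + ν) * ‖uhat p‖) ^ (2:ℝ) = (Ψ p + ν) * ‖uhat p‖ ^ 2
      rw [Real.rpow_two, mul_pow, Real.sq_sqrt (hpos p).le]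
    rw [h1]
    calc _ ≤ (∫ p, Real.sqrt (1 / (Ψ p + ν)) ^ (2:ℝ)) ^ (1/2:ℝ) *
        (∫ p, (Real.sqrt (Ψ p + ν) * ‖uhat p‖) ^ (2:ℝ)) ^ (1/2:ℝ) := hCS
    _ = Real.sqrt C * Real.sqrt S := by
        rw [h2, h3, Real.sqrt_eq_rpow, Real.sqrt_eq_rpow]
  -- norm of the integral
  have hN : ‖∫ p : ℝ, Complex.exp (-(Complex.I * p * a)) * uhat p‖ ≤
      Real.sqrt C * Real.sqrt S := by
    refine le_trans (norm_integral_le_integral_norm _) (le_trans (le_of_eq ?_) hKey)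
    refine integral_congr_ae (Filter.Eventually.of_forall fun p => ?_)
    show ‖Complex.exp (-(Complex.I * p * a)) * uhat p‖ = ‖uhat p‖
    rw [norm_mul]
    have : ‖Complex.exp (-(Complex.I * p * a))‖ = 1 := by
      rw [Complex.norm_exp]
      simp
    rw [this, one_mul]
  -- square it
  have hN2 : ‖∫ p : ℝ, Complex.exp (-(Complex.I * p * a)) * uhat p‖ ^ 2 ≤ C * S := by
    calc ‖∫ p : ℝ, Complex.exp (-(Complex.I * p * a)) * uhat p‖ ^ 2
        ≤ (Real.sqrt C * Real.sqrt S) ^ 2 := by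
          exact pow_le_pow_left₀ (norm_nonneg _) hN 2
      _ = C * S := by rw [mul_pow, Real.sq_sqrt hCnonneg, Real.sq_sqrt hSnonneg]
  -- C = 2π/μ
  have hCval : C = 2 * π / μ := by
    have h2π : (2 * π) ≠ 0 := by positivity
    field_simp at hμν
    rw [hC]
    field_simp
    linarith [hμν]
  -- S = ∫Ψ‖û‖² + ν∫‖û‖²
  have hSval : S = (∫ p, Ψ p * ‖uhat p‖ ^ 2) + ν * ∫ p, ‖uhat p‖ ^ 2 := by
    rw [hS, ← integral_const_mul]
    rw [← integral_add hintΨ (hint2.const_mul ν)]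
    refine integral_congr_ae (Filter.Eventually.of_forall fun p => ?_)
    ring
  -- finish
  have hnorm : ‖(1 / (2 * π) : ℂ) * ∫ p : ℝ, Complex.exp (-(Complex.I * p * a)) * uhat p‖ ^ 2
      = (1 / (2 * π))^2 * ‖∫ p : ℝ, Complex.exp (-(Complex.I * p * a)) * uhat p‖ ^ 2 := by
    rw [norm_mul, mul_pow]
    congr 2
    rw [show ((1 / (2 * π) : ℂ)) = ((1 / (2 * π) : ℝ) : ℂ) by push_cast; ring,
      Complex.norm_real, Real.norm_of_nonneg (by positivity)]
  rw [hnorm]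
  have hfinal : μ * ((1 / (2 * π))^2 * ‖∫ p : ℝ, Complex.exp (-(Complex.I * p * a)) * uhat p‖ ^ 2)
      ≤ 1 / (2 * π) * S := by
    calc μ * ((1 / (2 * π))^2 * ‖∫ p : ℝ, Complex.exp (-(Complex.I * p * a)) * uhat p‖ ^ 2)
        ≤ μ * ((1 / (2 * π))^2 * (C * S)) := by
          have : (0:ℝ) ≤ μ * (1 / (2 * π))^2 := by positivity
          nlinarith [hN2]
      _ = 1 / (2 * π) * S := by rw [hCval]; field_simp
  rw [hSval] at hfinal
  linarith [hfinal]
end
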